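/- arXiv:1612.09203 — 7 statements merged into one kernel-verified Lean document; each statement's English description precedes it below -/
import Mathlib

section
/- Let W : ℝᵐ → ℝᵐ be linear with W*W = I and J(u) = ‖Wu‖₁, K = I : (ℝᵐ, ‖·‖₁) → (ℝᵐ, ‖·‖₂). If u_λ ∈ ℝᵐ is such that every nonzero entry of Wu_λ has the same absolute value c ≠ 0, then u_λ is a generalised singular vector: (‖Wu_λ‖₁/‖u_λ‖₂²) u_λ ∈ ∂J(u_λ). Moreover if ‖u_λ‖₂ = 1 and Wu_λ has n nonzero entries then the singular value is λ = √n. -/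
open Finset Matrix

/-- Vectors whose image under an orthonormal transform `W` consists of peaks of equal
magnitude are generalised singular vectors of `J(u) = ‖Wu‖₁` with `K` the identity. -/
theorem dictionary_singular_vectors
    {m : ℕ} (W : Matrix (Fin m) (Fin m) ℝ) (hW : W.transpose * W = 1)
    (u : Fin m → ℝ) (c : ℝ) (hc : c ≠ 0) (hne : u ≠ 0)
    (hpeak : ∀ i, W.mulVec u i ≠ 0 → |W.mulVec u i| = |c|) :
    (∃ s : Fin m → ℝ,
      (∀ i, (W.mulVec u i ≠ 0 → s i = Real.sign (W.mulVec u i)) ∧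
        s i ∈ Set.Icc (-1 : ℝ) 1) ∧
      ((∑ i, |W.mulVec u i|) / (∑ i, (u i) ^ 2)) • u = W.transpose.mulVec s) ∧
    ((∑ i, (u i) ^ 2) = 1 →
      (∑ i, |W.mulVec u i|) / (∑ i, (u i) ^ 2)
        = Real.sqrt ((univ.filter (fun i => W.mulVec u i ≠ 0)).card)) := by
  set v : Fin m → ℝ := W.mulVec u with hv
  have habs : (0:ℝ) < |c| := abs_pos.mpr hc
  have hu : W.transpose.mulVec v = u := by
    rw [hv, Matrix.mulVec_mulVec, hW, Matrix.one_mulVec]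
  -- v ≠ 0
  have hvne : v ≠ 0 := by
    intro h
    exact hne (by rw [← hu, h, Matrix.mulVec_zero])
  obtain ⟨i0, hi0⟩ : ∃ i, v i ≠ 0 := by
    by_contra h
    push_neg at h
    exact hvne (funext h)
  set n : ℕ := (univ.filter (fun i => v i ≠ 0)).card with hn
  have hnpos : 0 < n := Finset.card_pos.mpr ⟨i0, by simp [hi0]⟩
  have hn0 : (n:ℝ) ≠ 0 := Nat.cast_ne_zero.mpr hnpos.ne'
  -- sum of abs
  have hsum1 : ∑ i, |v i| = n * |c| := by
    rw [← Finset.sum_filter_of_ne (p := fun i => v i ≠ 0)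
      (by intro x _ hx; exact fun h => hx (by rw [h, abs_zero]))]
    rw [Finset.sum_congr rfl (fun x hx => hpeak x (by simpa using hx))]
    simp [mul_comm]
    exact Or.inl rfl
  have hsum2 : ∑ i, v i ^ 2 = n * c ^ 2 := by
    rw [← Finset.sum_filter_of_ne (p := fun i => v i ≠ 0)
      (by intro x _ hx; exact fun h => hx (by simpa using h))]
    rw [Finset.sum_congr rfl (fun x hx => by
      rw [← sq_abs, hpeak x (by simpa using hx), sq_abs])]
    simp [mul_comm]
    exact Or.inl rfl
  -- norm preservation
  have hsq : ∑ i, (u i) ^ 2 = ∑ i, v i ^ 2 := by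
    have h1 : v ⬝ᵥ v = u ⬝ᵥ u := by
      calc v ⬝ᵥ v = v ⬝ᵥ (W.mulVec u) := rfl
        _ = (Matrix.vecMul v W) ⬝ᵥ u := Matrix.dotProduct_mulVec _ _ _
        _ = (W.transpose.mulVec v) ⬝ᵥ u := by rw [Matrix.mulVec_transpose]
        _ = u ⬝ᵥ u := by rw [hu]
    simpa [dotProduct, sq] using h1.symm
  have hlam : (∑ i, |v i|) / (∑ i, (u i) ^ 2) = |c|⁻¹ := by
    rw [hsum1, hsq, hsum2, ← sq_abs c]
    field_simp
  constructor
  · refine ⟨fun i => Real.sign (v i), fun i => ⟨fun _ => rfl, ?_⟩, ?_⟩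
    · show Real.sign (v i) ∈ Set.Icc (-1:ℝ) 1
      rcases lt_trichotomy (v i) 0 with h | h | h
      · rw [Real.sign_of_neg h]; constructor <;> norm_num
      · rw [h, Real.sign_zero]; constructor <;> norm_num
      · rw [Real.sign_of_pos h]; constructor <;> norm_num
    · have hs : (fun i => Real.sign (v i)) = |c|⁻¹ • v := by
        funext i
        by_cases h : v i = 0
        · simp [h]
        · have habsv : |v i| = |c| := hpeak i h
          rcases lt_trichotomy (v i) 0 with h' | h' | h'
          · rw [Real.sign_of_neg h']
            have : |v i| = -(v i) := abs_of_neg h'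
            rw [← habsv]
            field_simp [this]
            rw [Pi.smul_apply, smul_eq_mul, this]
            field_simp
          · exact absurd h' h
          · rw [Real.sign_of_pos h']
            have : |v i| = v i := abs_of_pos h'
            rw [← habsv]
            field_simp [this]
            rw [Pi.smul_apply, smul_eq_mul, this]
            field_simp
      rw [hlam, hs, Matrix.mulVec_smul, hu]
  · intro h1
    have hnc : (n:ℝ) * c ^ 2 = 1 := by rw [← hsum2, ← hsq, h1]
    rw [h1, div_one, hsum1]
    have key : ((n:ℝ) * |c|) ^ 2 = (n : ℝ) := by
      rw [mul_pow, sq_abs]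
      nlinarith
    have hs := Real.sqrt_sq (show (0:ℝ) ≤ (n:ℝ) * |c| by positivity)
    rw [key] at hs
    exact hs.symm
end

section
/- Let {u_{λ_j}}_{j=1}^n be K-normalised singular vectors of an absolutely one-homogeneous convex functional J, satisfying K-orthogonality ⟨Ku_{λ_i}, Ku_{λ_j}⟩ = 0 for i ≠ j, and the SUB0 condition Σ_{j=1}^k λ_j K*K u_{λ_j} ∈ ∂J(0) for all k = 1,…,n. Then for every k ∈ {1,…,n} and all coefficients c_j ≥ 0: Σ_{j=1}^k λ_j K*K u_{λ_j} ∈ ∂J(Σ_{j=1}^k c_j u_{λ_j}). Conversely, if this inclusion holds for all k with some nonnegative coefficients, then SUB0 holds. -/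
open RealInnerProductSpace Finset

/-- The subdifferential of `J` at `u`. -/
def subdiff {U : Type*} [NormedAddCommGroup U] [NormedSpace ℝ U]
    (J : U → ℝ) (u : U) : Set (U →L[ℝ] ℝ) :=
  {p | ∀ v : U, J u + p (v - u) ≤ J v}

/-- The Banach adjoint `K*` applied to `w ∈ H`. -/
noncomputable def Kstar {U H : Type*} [NormedAddCommGroup U] [NormedSpace ℝ U]
    [NormedAddCommGroup H] [InnerProductSpace ℝ H]
    (K : U →L[ℝ] H) (w : H) : U →L[ℝ] ℝ :=
  ((innerSL ℝ) w).comp K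

/-- The SUB0 condition is equivalent to linearity of the subdifferential on nonnegative
combinations of K-orthogonal singular vectors. -/
theorem sub0_iff_subdifferential_linearity
    {U H : Type*} [NormedAddCommGroup U] [NormedSpace ℝ U]
    [NormedAddCommGroup H] [InnerProductSpace ℝ H]
    (K : U →L[ℝ] H) (J : U → ℝ)
    (hconv : ConvexOn ℝ Set.univ J)
    (hlsc : LowerSemicontinuous J)
    (hhom : ∀ (c : ℝ) (x : U), J (c • x) = |c| * J x)
    (n : ℕ) (u : ℕ → U) (lam : ℕ → ℝ)
    (hsv : ∀ j < n, (lam j • Kstar K (K (u j))) ∈ subdiff J (u j))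
    (hnorm : ∀ j < n, ‖K (u j)‖ = 1)
    (hlam : ∀ j < n, lam j = J (u j))
    (horth : ∀ i < n, ∀ j < n, i ≠ j → ⟪K (u i), K (u j)⟫ = 0) :
    ((∀ k, 1 ≤ k → k ≤ n →
        (∑ j ∈ range k, lam j • Kstar K (K (u j))) ∈ subdiff J 0) ↔
      (∀ k, 1 ≤ k → k ≤ n → ∀ c : ℕ → ℝ, (∀ j, 0 ≤ c j) →
        (∑ j ∈ range k, lam j • Kstar K (K (u j))) ∈
          subdiff J (∑ j ∈ range k, c j • u j))) := by
  have hJ0 : J 0 = 0 := by simpa using hhom 0 0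
  have hsubadd : ∀ a b : U, J (a + b) ≤ J a + J b := by
    intro a b
    have h1 : J ((1/2 : ℝ) • a + (1/2 : ℝ) • b)
        ≤ (1/2 : ℝ) * J a + (1/2 : ℝ) * J b :=
      hconv.2 (Set.mem_univ a) (Set.mem_univ b) (by norm_num) (by norm_num) (by norm_num)
    have h2 : J (a + b) = 2 * J ((1/2 : ℝ) • a + (1/2 : ℝ) • b) := by
      have := hhom 2 ((1/2 : ℝ) • a + (1/2 : ℝ) • b)
      rw [smul_add, smul_smul, smul_smul] at this
      norm_num at this
      simpa using this
    linarith
  -- value of the sum functional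
  have hPapp : ∀ k v, (∑ j ∈ range k, lam j • Kstar K (K (u j))) v
      = ∑ j ∈ range k, lam j * ⟪K (u j), K v⟫ := by
    intro k v
    simp [Kstar, ContinuousLinearMap.sum_apply]
  constructor
  · intro h0 k hk1 hkn c hc
    have hP0 : ∀ v : U, (∑ j ∈ range k, lam j • Kstar K (K (u j))) v ≤ J v := by
      intro v
      have := h0 k hk1 hkn v
      simpa [hJ0] using this
    set w : U := ∑ j ∈ range k, c j • u j with hw
    -- value at w
    have hPw : (∑ j ∈ range k, lam j • Kstar K (K (u j))) w
        = ∑ j ∈ range k, c j * lam j := by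
      rw [hPapp]
      apply Finset.sum_congr rfl
      intro j hj
      have hjk : j < k := Finset.mem_range.mp hj
      have hjn : j < n := lt_of_lt_of_le hjk hkn
      have hKw : K w = ∑ i ∈ range k, c i • K (u i) := by
        simp [hw, map_sum]
      rw [hKw, inner_sum]
      have : ∀ i ∈ range k, ⟪K (u j), c i • K (u i)⟫ = if i = j then c j else 0 := by
        intro i hi
        have hin : i < n := lt_of_lt_of_le (Finset.mem_range.mp hi) hkn
        by_cases h : i = j
        · subst h
          rw [real_inner_smul_right, real_inner_self_eq_norm_sq, hnorm i hin]
          simp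
        · rw [real_inner_smul_right, horth j hjn i hin (Ne.symm h)]
          simp [h]
      rw [Finset.sum_congr rfl this, Finset.sum_ite_eq' (range k) j (fun _ => c j)]
      simp [hj]
      ring
    -- J w ≤ ∑ c j * lam j
    have hJw : ∀ m, m ≤ n → J (∑ j ∈ range m, c j • u j) ≤ ∑ j ∈ range m, c j * lam j := by
      intro m
      induction m with
      | zero => intro _; simp [hJ0]
      | succ m ih =>
        intro hm
        rw [Finset.sum_range_succ, Finset.sum_range_succ]
        have hmn : m < n := hm
        calc J ((∑ j ∈ range m, c j • u j) + c m • u m)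
            ≤ J (∑ j ∈ range m, c j • u j) + J (c m • u m) := hsubadd _ _
          _ ≤ (∑ j ∈ range m, c j * lam j) + c m * lam m := by
              have h1 : J (c m • u m) = c m * lam m := by
                rw [hhom, abs_of_nonneg (hc m), hlam m hmn]
              rw [h1]
              exact add_le_add (ih (le_of_lt hmn)) le_rfl
    have hJw' : J w ≤ ∑ j ∈ range k, c j * lam j := hJw k hkn
    intro v
    have hPv := hP0 v
    have hsplit : (∑ j ∈ range k, lam j • Kstar K (K (u j))) (v - w)
        = (∑ j ∈ range k, lam j • Kstar K (K (u j))) v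
          - (∑ j ∈ range k, lam j • Kstar K (K (u j))) w := by
      exact map_sub _ _ _
    rw [hsplit, hPw]
    linarith
  · intro h k hk1 hkn
    have := h k hk1 hkn (fun _ => 0) (fun _ => le_refl 0)
    simpa using this
end

section
/- Let {u_{λ_j}}_{j=1}^n be K-normalised singular vectors of an absolutely one-homogeneous convex functional J satisfying the orthogonality condition ⟨Ku_{λ_i}, Ku_{λ_j}⟩ = 0 for i ≠ j and the SUB0 condition Σ_{j=1}^n λ_j K*K u_{λ_j} ∈ ∂J(0). Then J(Σ_{j=1}^n c_j u_{λ_j}) = Σ_{j=1}^n c_j J(u_{λ_j}) for all nonnegative coefficients c_j ≥ 0. -/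
open RealInnerProductSpace Finset

/-- Under orthogonality and SUB0, `J` is linear on nonnegative combinations of the
singular vectors. -/
theorem J_linear_on_nonneg_combinations
    {U H : Type*} [NormedAddCommGroup U] [NormedSpace ℝ U]
    [NormedAddCommGroup H] [InnerProductSpace ℝ H]
    (K : U →L[ℝ] H) (J : U → ℝ)
    (hconv : ConvexOn ℝ Set.univ J)
    (hlsc : LowerSemicontinuous J)
    (hhom : ∀ (c : ℝ) (x : U), J (c • x) = |c| * J x)
    (n : ℕ) (u : ℕ → U) (lam : ℕ → ℝ)
    (hsv : ∀ j < n, (lam j • Kstar K (K (u j))) ∈ subdiff J (u j))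
    (hnorm : ∀ j < n, ‖K (u j)‖ = 1)
    (hlam : ∀ j < n, lam j = J (u j))
    (horth : ∀ i < n, ∀ j < n, i ≠ j → ⟪K (u i), K (u j)⟫ = 0)
    (hSUB0 : (∑ j ∈ range n, lam j • Kstar K (K (u j))) ∈ subdiff J 0) :
    ∀ c : ℕ → ℝ, (∀ j, 0 ≤ c j) →
      J (∑ j ∈ range n, c j • u j) = ∑ j ∈ range n, c j * J (u j) := by
  intro c hc
  have hJ0 : J 0 = 0 := by
    have := hhom 0 (0 : U)
    simpa using this
  have hsub : ∀ x y : U, J (x + y) ≤ J x + J y := by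
    intro x y
    have h2 : J ((1/2 : ℝ) • (x + y)) = (1/2) * J (x + y) := by
      rw [hhom]; norm_num
    have hc2 := hconv.2 (Set.mem_univ x) (Set.mem_univ y)
      (by norm_num : (0:ℝ) ≤ 1/2) (by norm_num : (0:ℝ) ≤ 1/2) (by norm_num)
    have hsm : (1/2 : ℝ) • (x + y) = (1/2:ℝ) • x + (1/2:ℝ) • y := smul_add _ _ _
    rw [← hsm, h2, smul_eq_mul, smul_eq_mul] at hc2
    linarith [hc2]
  have hub : ∀ m, J (∑ j ∈ range m, c j • u j) ≤ ∑ j ∈ range m, c j * J (u j) := by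
    intro m
    induction m with
    | zero => simp [hJ0]
    | succ m ih =>
      rw [Finset.sum_range_succ, Finset.sum_range_succ]
      calc J (∑ j ∈ range m, c j • u j + c m • u m)
          ≤ J (∑ j ∈ range m, c j • u j) + J (c m • u m) := hsub _ _
        _ ≤ ∑ j ∈ range m, c j * J (u j) + c m * J (u m) := by
            rw [hhom, abs_of_nonneg (hc m)]; linarith [ih]
  set w := ∑ j ∈ range n, c j • u j with hw
  have hp := hSUB0 w
  rw [hJ0, sub_zero, zero_add] at hp
  have hKw : K w = ∑ j ∈ range n, c j • K (u j) := by
    simp [hw, map_sum]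
  have hpw : (∑ j ∈ range n, lam j • Kstar K (K (u j))) w
      = ∑ j ∈ range n, c j * J (u j) := by
    rw [ContinuousLinearMap.sum_apply]
    refine Finset.sum_congr rfl ?_
    intro i hi
    have hin : i < n := Finset.mem_range.mp hi
    have hinner : ⟪K (u i), K w⟫ = c i := by
      rw [hKw, inner_sum]
      rw [Finset.sum_eq_single i]
      · rw [real_inner_smul_right, real_inner_self_eq_norm_sq, hnorm i hin]
        ring
      · intro j hj hji
        rw [real_inner_smul_right, horth i hin j (Finset.mem_range.mp hj) (Ne.symm hji)]
        ring
      · intro h; exact absurd hi h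
    have : (lam i • Kstar K (K (u i))) w = lam i * ⟪K (u i), K w⟫ := rfl
    rw [this, hinner, hlam i hin]
    ring
  rw [hpw] at hp
  exact le_antisymm (hub n) hp
end

section
/- Suppose the absolutely one-homogeneous functional J satisfies the norm-inequality c₀‖u‖_U ≤ J(u) for all u ∈ ker(J)^⊥ with constant c₀ > 0. If ω* ∈ U* satisfies ‖ω*‖_{U*} ≤ c₀ and ⟨ω*, v⟩ = 0 for all v ∈ ker(J), then ω* ∈ ∂J(0), i.e. ⟨ω*, w⟩ ≤ J(w) for all w ∈ U. -/
/-- Under a norm inequality on the complement of the kernel, bounded dual elements that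
vanish on the kernel of `J` belong to the subdifferential of `J` at zero. -/
theorem dual_norm_bound_implies_subdiff_at_zero
    {U : Type*} [NormedAddCommGroup U] [NormedSpace ℝ U]
    (J : U → ℝ)
    (hconv : ConvexOn ℝ Set.univ J)
    (hhom : ∀ (c : ℝ) (x : U), J (c • x) = |c| * J x)
    (c₀ : ℝ) (hc₀ : 0 < c₀) (Kperp : Set U)
    (hNI : ∀ u ∈ Kperp, c₀ * ‖u‖ ≤ J u)
    (hdecomp : ∀ ω : U, ∃ ω₁ ω₂ : U, ω = ω₁ + ω₂ ∧ J ω₁ = 0 ∧ ω₂ ∈ Kperp)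
    (p : U →L[ℝ] ℝ) (hp : ‖p‖ ≤ c₀)
    (hker : ∀ v : U, J v = 0 → p v = 0) :
    ∀ w : U, p w ≤ J w := by
  -- subadditivity of J
  have hsub : ∀ x y : U, J (x + y) ≤ J x + J y := by
    intro x y
    have h := hconv.2 (Set.mem_univ x) (Set.mem_univ y)
      (by norm_num : (0:ℝ) ≤ (1/2:ℝ)) (by norm_num : (0:ℝ) ≤ (1/2:ℝ)) (by norm_num)
    have h2 : J ((1/2 : ℝ) • (x + y)) ≤ (1/2:ℝ) * J x + (1/2:ℝ) * J y := by
      simpa [smul_add] using h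
    have h3 : J ((1/2 : ℝ) • (x + y)) = (1/2:ℝ) * J (x + y) := by
      rw [hhom]; norm_num
    linarith [h3 ▸ h2]
  intro w
  obtain ⟨ω₁, ω₂, hw, h1, h2⟩ := hdecomp w
  have hpω₁ : p ω₁ = 0 := hker ω₁ h1
  have hpw : p w = p ω₂ := by rw [hw, map_add, hpω₁, zero_add]
  have hbound : p ω₂ ≤ c₀ * ‖ω₂‖ := by
    calc p ω₂ ≤ ‖p ω₂‖ := le_abs_self _
    _ ≤ ‖p‖ * ‖ω₂‖ := p.le_opNorm ω₂
    _ ≤ c₀ * ‖ω₂‖ := by gcongr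
  have hJ2 : J ω₂ ≤ J w := by
    have hneg : J (-ω₁) = 0 := by
      have := hhom (-1) ω₁
      simpa [h1] using this
    have : J (ω₂) = J (w + -ω₁) := by rw [hw]; rw [add_comm ω₁ ω₂, add_neg_cancel_right]
    rw [this]
    calc J (w + -ω₁) ≤ J w + J (-ω₁) := hsub _ _
    _ = J w := by rw [hneg, add_zero]
  calc p w = p ω₂ := hpw
  _ ≤ c₀ * ‖ω₂‖ := hbound
  _ ≤ J ω₂ := hNI ω₂ h2
  _ ≤ J w := hJ2
end

section
/- (Impossible singular vector fusion) Let {u_{λ_j}}_{j=1}^n be K-normalised singular vectors satisfying K-orthogonality and the SUB0 condition, and let γ_j > 0 with λ_j/γ_j < λ_{j+1}/γ_{j+1}. Then for any subset {u_{λ_{j_k}}}_{k=1}^m with m ≥ 2 ordered so that λ_{j_k}/γ_{j_k} < λ_{j_{k+1}}/γ_{j_{k+1}}, the vector w = Σ_{k=1}^m γ_{j_k} u_{λ_{j_k}} is not a singular vector; i.e. (J(w)/‖Kw‖²) K*K w ∉ ∂J(w). -/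
open RealInnerProductSpace Finset

/-- Impossible singular vector fusion: under orthogonality and SUB0, no weighted sum of
two or more of the singular vectors can itself be a singular vector. -/
theorem impossible_singular_vector_fusion
    {U H : Type*} [NormedAddCommGroup U] [NormedSpace ℝ U]
    [NormedAddCommGroup H] [InnerProductSpace ℝ H]
    (K : U →L[ℝ] H) (J : U → ℝ)
    (hconv : ConvexOn ℝ Set.univ J)
    (hlsc : LowerSemicontinuous J)
    (hhom : ∀ (c : ℝ) (x : U), J (c • x) = |c| * J x)
    (n : ℕ) (u : ℕ → U) (lam γ : ℕ → ℝ)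
    (hsv : ∀ j < n, (lam j • Kstar K (K (u j))) ∈ subdiff J (u j))
    (hnorm : ∀ j < n, ‖K (u j)‖ = 1)
    (hlam : ∀ j < n, lam j = J (u j))
    (hlampos : ∀ j < n, 0 < lam j)
    (horth : ∀ i < n, ∀ j < n, i ≠ j → ⟪K (u i), K (u j)⟫ = 0)
    (hSUB0 : ∀ k, 1 ≤ k → k ≤ n →
      (∑ j ∈ range k, lam j • Kstar K (K (u j))) ∈ subdiff J 0)
    (hγ : ∀ j < n, 0 < γ j)
    (hord : ∀ j, j + 1 < n → lam j / γ j < lam (j + 1) / γ (j + 1))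
    (m : ℕ) (hm : 2 ≤ m) (idx : ℕ → ℕ)
    (hidx : ∀ k < m, idx k < n)
    (hidxord : ∀ k, k + 1 < m →
      lam (idx k) / γ (idx k) < lam (idx (k + 1)) / γ (idx (k + 1))) :
    ¬ ((J (∑ k ∈ range m, γ (idx k) • u (idx k)) /
          ‖K (∑ k ∈ range m, γ (idx k) • u (idx k))‖ ^ 2) •
        Kstar K (K (∑ k ∈ range m, γ (idx k) • u (idx k))) ∈
          subdiff J (∑ k ∈ range m, γ (idx k) • u (idx k))) := by
  intro hmem
  set w : U := ∑ k ∈ range m, γ (idx k) • u (idx k) with hw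
  set μ : ℝ := J w / ‖K w‖ ^ 2 with hμ
  simp only [subdiff, Set.mem_setOf_eq] at hmem
  have h0m : 0 < m := by omega
  have h1m : 1 < m := hm
  have hn1 : 1 ≤ n := by have := hidx 0 h0m; omega
  -- strict monotonicity of k ↦ lam (idx k) / γ (idx k)
  have hflt : ∀ l, l < m → ∀ k, k < l →
      lam (idx k) / γ (idx k) < lam (idx l) / γ (idx l) := by
    intro l
    induction l with
    | zero => intro _ k hk; omega
    | succ l ih =>
      intro hl k hk
      have h2 := hidxord l hl
      rcases Nat.lt_succ_iff_lt_or_eq.mp hk with h | h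
      · exact (ih (by omega) k h).trans h2
      · subst h; exact h2
  have hne : ∀ k, k < m → ∀ l, l < m → k ≠ l → idx k ≠ idx l := by
    intro k hk l hl hkl heq
    rcases Nat.lt_or_ge k l with h | h
    · have := hflt l hl k h; rw [heq] at this; exact lt_irrefl _ this
    · have hlk : l < k := by omega
      have := hflt k hk l hlk; rw [heq] at this; exact lt_irrefl _ this
  have hKu : ∀ k, k < m → ∀ l, l < m →
      ⟪K (u (idx k)), K (u (idx l))⟫ = if k = l then 1 else 0 := by
    intro k hk l hl
    by_cases h : k = l
    · subst h
      simp [real_inner_self_eq_norm_sq, hnorm (idx k) (hidx k hk)]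
    · simp [h, horth (idx k) (hidx k hk) (idx l) (hidx l hl) (hne k hk l hl h)]
  have hKw : K w = ∑ k ∈ range m, γ (idx k) • K (u (idx k)) := by
    simp [hw, map_sum, map_smul]
  have hKuw : ∀ k, k < m → ⟪K (u (idx k)), K w⟫ = γ (idx k) := by
    intro k hk
    rw [hKw, inner_sum]
    rw [Finset.sum_eq_single k (fun l hl hlk => by
        rw [real_inner_smul_right, hKu k hk l (mem_range.mp hl)]
        rw [if_neg (fun h : k = l => hlk h.symm), mul_zero])
      (fun h => absurd (mem_range.mpr hk) h)]
    rw [real_inner_smul_right, hKu k hk k hk]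
    simp
  have hKww : ⟪K w, K w⟫ = ∑ k ∈ range m, γ (idx k) ^ 2 := by
    nth_rewrite 1 [hKw]
    rw [sum_inner]
    refine Finset.sum_congr rfl fun k hk => ?_
    rw [real_inner_smul_left, hKuw k (mem_range.mp hk)]
    ring
  have hS : ‖K w‖ ^ 2 = ∑ k ∈ range m, γ (idx k) ^ 2 := by
    rw [← real_inner_self_eq_norm_sq, hKww]
  have hSpos : 0 < ‖K w‖ ^ 2 := by
    rw [hS]
    apply Finset.sum_pos
    · intro k hk
      exact pow_pos (hγ (idx k) (hidx k (mem_range.mp hk))) 2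
    · exact ⟨0, mem_range.mpr h0m⟩
  have hJ0 : J 0 = 0 := by
    have h := hhom 0 0
    simpa using h
  -- the SUB0 functional evaluated at w
  have hqw : (∑ j ∈ range n, lam j • Kstar K (K (u j))) w
      = ∑ k ∈ range m, lam (idx k) * γ (idx k) := by
    rw [ContinuousLinearMap.sum_apply]
    have hterm : ∀ j ∈ range n, (lam j • Kstar K (K (u j))) w
        = lam j * ⟪K (u j), K w⟫ := by
      intro j hj
      simp [Kstar, smul_eq_mul]
    rw [Finset.sum_congr rfl hterm]
    have hexp : ∀ j ∈ range n, lam j * ⟪K (u j), K w⟫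
        = ∑ k ∈ range m, lam j * (γ (idx k) * ⟪K (u j), K (u (idx k))⟫) := by
      intro j hj
      rw [hKw, inner_sum, Finset.mul_sum]
      refine Finset.sum_congr rfl fun k hk => ?_
      rw [real_inner_smul_right]
    rw [Finset.sum_congr rfl hexp, Finset.sum_comm]
    refine Finset.sum_congr rfl fun k hk => ?_
    have hkm := mem_range.mp hk
    rw [Finset.sum_eq_single (idx k) (fun j hj hjk => by
        rw [horth j (mem_range.mp hj) (idx k) (hidx k hkm) hjk]
        ring)
      (fun h => absurd (mem_range.mpr (hidx k hkm)) h)]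
    have : ⟪K (u (idx k)), K (u (idx k))⟫ = (1:ℝ) := by
      rw [real_inner_self_eq_norm_sq, hnorm (idx k) (hidx k hkm)]; norm_num
    rw [this]; ring
  have hq' : ∑ k ∈ range m, lam (idx k) * γ (idx k) ≤ J w := by
    have h := hSUB0 n hn1 le_rfl w
    rw [sub_zero, hqw, hJ0, zero_add] at h
    exact h
  have hp : ∀ v : U, (μ • Kstar K (K w)) v = μ * ⟪K w, K v⟫ := by
    intro v
    simp [Kstar, smul_eq_mul]
  have hpw : (μ • Kstar K (K w)) w = J w := by
    rw [hp w, hKww, ← hS, hμ]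
    exact div_mul_cancel₀ _ hSpos.ne'
  have hμle : ∀ k, k < m → μ * γ (idx k) ≤ lam (idx k) := by
    intro k hk
    have h := hmem (u (idx k))
    rw [map_sub, hpw] at h
    have hpu : (μ • Kstar K (K w)) (u (idx k)) = μ * γ (idx k) := by
      rw [hp, real_inner_comm, hKuw k hk]
    rw [hpu] at h
    have := hlam (idx k) (hidx k hk)
    linarith
  have hJw : J w = ∑ k ∈ range m, μ * γ (idx k) ^ 2 := by
    rw [← Finset.mul_sum, ← hS, hμ]
    exact (div_mul_cancel₀ _ hSpos.ne').symm
  have hsum : ∑ k ∈ range m, μ * γ (idx k) ^ 2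
      < ∑ k ∈ range m, lam (idx k) * γ (idx k) := by
    apply Finset.sum_lt_sum
    · intro k hk
      have hkm := mem_range.mp hk
      have hγk := hγ (idx k) (hidx k hkm)
      have := hμle k hkm
      nlinarith
    · refine ⟨1, mem_range.mpr h1m, ?_⟩
      have hγ1 := hγ (idx 1) (hidx 1 h1m)
      have hγ0 := hγ (idx 0) (hidx 0 h0m)
      have h01 := hflt 1 h1m 0 Nat.zero_lt_one
      have hμ0 := hμle 0 h0m
      have h01' : lam (idx 0) * γ (idx 1) < lam (idx 1) * γ (idx 0) :=
        (div_lt_div_iff₀ hγ0 hγ1).mp h01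
      nlinarith [mul_pos hγ0 hγ1]
  linarith [hJw ▸ hq']
end

section
/- Let ω ∈ U \ {0} satisfy the strong source condition K*Kω ∈ ∂J(u†) for some u† ∈ dom(J) with Ku† ≠ 0, and let f = Kω. Then with t₁ = 1 and γ = J(u†)/‖Ku†‖², the pair (u, p) given by u(t) = 0, p(t) = t K*Kω for 0 ≤ t < t₁ and u(t₁) = γ u† satisfies: (i) p(t) ∈ ∂J(0) for 0 ≤ t < t₁; (ii) p(t₁) = K*Kω ∈ ∂J(γ u†); (iii) the orthogonality ⟨K*(f − K u(t₁)), u(t₁)⟩ = 0. -/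
open RealInnerProductSpace

/-- First non-trivial solution of the ISS flow under the strong source condition. -/
theorem first_iss_solution_strong_source_condition
    {U H : Type*} [NormedAddCommGroup U] [NormedSpace ℝ U]
    [NormedAddCommGroup H] [InnerProductSpace ℝ H]
    (K : U →L[ℝ] H) (J : U → ℝ)
    (hconv : ConvexOn ℝ Set.univ J)
    (hlsc : LowerSemicontinuous J)
    (hhom : ∀ (c : ℝ) (x : U), J (c • x) = |c| * J x)
    (ω udag : U) (hω : ω ≠ 0) (hKudag : K udag ≠ 0)
    (hssc : Kstar K (K ω) ∈ subdiff J udag) :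
    (∀ t : ℝ, 0 ≤ t → t < 1 → (t • Kstar K (K ω)) ∈ subdiff J 0) ∧
    Kstar K (K ω) ∈ subdiff J ((J udag / ‖K udag‖ ^ 2) • udag) ∧
    ⟪K ω - K ((J udag / ‖K udag‖ ^ 2) • udag),
      K ((J udag / ‖K udag‖ ^ 2) • udag)⟫ = 0 := by
  set p : U →L[ℝ] ℝ := Kstar K (K ω) with hp
  -- J 0 = 0
  have hJ0 : J 0 = 0 := by
    have := hhom 0 0
    simpa using this
  -- J is nonnegative
  have hJnonneg : ∀ x : U, 0 ≤ J x := by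
    intro x
    have hm := hconv.2 (Set.mem_univ x) (Set.mem_univ (-x))
      (by norm_num : (0:ℝ) ≤ 1/2) (by norm_num : (0:ℝ) ≤ 1/2) (by norm_num)
    have hx : (1/2 : ℝ) • x + (1/2 : ℝ) • (-x) = 0 := by
      simp
    rw [hx, hJ0] at hm
    have hneg : J (-x) = J x := by
      have := hhom (-1) x
      simpa using this
    rw [hneg] at hm
    simp only [smul_eq_mul] at hm
    linarith
  -- p udag = J udag
  have h1 := hssc 0
  have h2 := hssc ((2:ℝ) • udag)
  simp only [zero_sub, map_neg] at h1
  rw [hJ0] at h1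
  have h2' : J udag + p udag ≤ 2 * J udag := by
    have he : (2:ℝ) • udag - udag = udag := by
      rw [two_smul]; abel
    rw [he] at h2
    have := hhom 2 udag
    rw [this] at h2
    simpa using h2
  have hpu : p udag = J udag := by linarith
  -- p v ≤ J v for all v
  have hpv : ∀ v : U, p v ≤ J v := by
    intro v
    have := hssc v
    rw [map_sub, hpu] at this
    linarith
  refine ⟨?_, ?_, ?_⟩
  · intro t ht0 ht1 v
    simp only [subdiff, Set.mem_setOf_eq, sub_zero, hJ0, zero_add,
      ContinuousLinearMap.smul_apply, smul_eq_mul]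
    rcases le_or_gt (p v) 0 with h | h
    · have : t * p v ≤ 0 := mul_nonpos_of_nonneg_of_nonpos ht0 h
      exact this.trans (hJnonneg v)
    · calc t * p v ≤ 1 * p v := by nlinarith
        _ = p v := one_mul _
        _ ≤ J v := hpv v
  · intro v
    set γ : ℝ := J udag / ‖K udag‖ ^ 2 with hγ
    have hγ0 : 0 ≤ γ := div_nonneg (hJnonneg udag)
      (by positivity)
    have hJγ : J (γ • udag) = γ * J udag := by
      rw [hhom, abs_of_nonneg hγ0]
    rw [map_sub, ContinuousLinearMap.map_smul, hpu]
    rw [hJγ]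
    have := hpv v
    simp only [smul_eq_mul]
    linarith
  · set γ : ℝ := J udag / ‖K udag‖ ^ 2 with hγ
    have hK : K (γ • udag) = γ • K udag := by simp
    rw [hK]
    have hipKω : ⟪K ω, K udag⟫ = J udag := by
      have : p udag = ⟪K ω, K udag⟫ := by
        simp [hp, Kstar]
      linarith [hpu]
    have hnorm : ⟪K udag, K udag⟫ = ‖K udag‖ ^ 2 := real_inner_self_eq_norm_sq _
    have hne : ‖K udag‖ ^ 2 ≠ 0 := pow_ne_zero 2 (norm_ne_zero_iff.mpr hKudag)
    rw [inner_sub_left, real_inner_smul_right, real_inner_smul_left,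
      real_inner_smul_right, hipKω, hnorm]
    field_simp [hγ]
    rw [hγ, div_mul_cancel₀ _ hne, sub_self, mul_zero]
end

section
/- (Inverse scale space decomposition, case n = 2) Let u_{λ_1}, u_{λ_2} be K-normalised singular vectors with singular values λ_1, λ_2 (λ_j K*K u_{λ_j} ∈ ∂J(u_{λ_j}), ‖Ku_{λ_j}‖ = 1), satisfying ⟨Ku_{λ_1}, Ku_{λ_2}⟩ = 0 and the SUB0 condition λ_1K*Ku_{λ_1} ∈ ∂J(0), λ_1K*Ku_{λ_1} + λ_2K*Ku_{λ_2} ∈ ∂J(0). Let f = γ_1 Ku_{λ_1} + γ_2 Ku_{λ_2} with γ_1, γ_2 > 0 and t_1 := λ_1/γ_1 < t_2 := λ_2/γ_2. Define u(t) = 0 for t < t_1, u(t) = γ_1 u_{λ_1} for t_1 ≤ t < t_2, u(t) = γ_1 u_{λ_1} + γ_2 u_{λ_2} for t ≥ t_2, and p(t) = t K*f for t < t_1, p(t) = λ_1K*Ku_{λ_1} + t γ_2 K*Ku_{λ_2} for t_1 ≤ t < t_2, p(t) = λ_1K*Ku_{λ_1} + λ_2K*Ku_{λ_2} for t ≥ t_2.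 Then p(t) ∈ ∂J(u(t)) for all t ≥ 0 and ∂ₜ p(t) = K*(f − Ku(t)) on each interval, i.e. (u, p) solves the inverse scale space flow. -/
open RealInnerProductSpace

set_option maxHeartbeats 1000000 in
/-- Inverse scale space decomposition for a sum of two singular vectors: the piecewise
constant primal variable together with the piecewise linear dual variable solves the
inverse scale space flow. -/
theorem iss_decomposition_two_singular_vectors
    {U H : Type*} [NormedAddCommGroup U] [NormedSpace ℝ U]
    [NormedAddCommGroup H] [InnerProductSpace ℝ H]
    (K : U →L[ℝ] H) (J : U → ℝ)
    (hconv : ConvexOn ℝ Set.univ J)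
    (hlsc : LowerSemicontinuous J)
    (hhom : ∀ (c : ℝ) (x : U), J (c • x) = |c| * J x)
    (u₁ u₂ : U) (lam₁ lam₂ : ℝ)
    (hsv₁ : lam₁ • Kstar K (K u₁) ∈ subdiff J u₁)
    (hsv₂ : lam₂ • Kstar K (K u₂) ∈ subdiff J u₂)
    (hnorm₁ : ‖K u₁‖ = 1) (hnorm₂ : ‖K u₂‖ = 1)
    (hlam₁ : lam₁ = J u₁) (hlam₂ : lam₂ = J u₂)
    (horth : ⟪K u₁, K u₂⟫ = 0)
    (hSUB1 : lam₁ • Kstar K (K u₁) ∈ subdiff J 0)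
    (hSUB2 : lam₁ • Kstar K (K u₁) + lam₂ • Kstar K (K u₂) ∈ subdiff J 0)
    (γ₁ γ₂ : ℝ) (hγ₁ : 0 < γ₁) (hγ₂ : 0 < γ₂)
    (hord : lam₁ / γ₁ < lam₂ / γ₂)
    (f : H) (hf : f = γ₁ • K u₁ + γ₂ • K u₂)
    (uflow : ℝ → U) (pflow : ℝ → (U →L[ℝ] ℝ))
    (huflow : uflow = fun t =>
      if t < lam₁ / γ₁ then 0
      else if t < lam₂ / γ₂ then γ₁ • u₁
      else γ₁ • u₁ + γ₂ • u₂)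
    (hpflow : pflow = fun t =>
      if t < lam₁ / γ₁ then t • Kstar K f
      else if t < lam₂ / γ₂ then
        lam₁ • Kstar K (K u₁) + (t * γ₂) • Kstar K (K u₂)
      else lam₁ • Kstar K (K u₁) + lam₂ • Kstar K (K u₂)) :
    (∀ t : ℝ, 0 ≤ t → pflow t ∈ subdiff J (uflow t)) ∧
    (∀ t : ℝ, 0 ≤ t → t ≠ lam₁ / γ₁ → t ≠ lam₂ / γ₂ →
      HasDerivAt pflow (Kstar K (f - K (uflow t))) t) := by
  -- basic facts about J
  have hJ0 : J 0 = 0 := by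
    have h := hhom 0 (0 : U)
    simpa using h
  have hJneg : ∀ v : U, J (-v) = J v := by
    intro v
    have h := hhom (-1) v
    simpa using h
  have hJnonneg : ∀ v : U, 0 ≤ J v := by
    intro v
    have h := hconv.2 (Set.mem_univ v) (Set.mem_univ (-v))
      (by norm_num : (0:ℝ) ≤ (1:ℝ)/2) (by norm_num : (0:ℝ) ≤ (1:ℝ)/2) (by norm_num)
    have hmid : ((1:ℝ)/2) • v + ((1:ℝ)/2) • (-v) = (0 : U) := by
      simp
    rw [hmid, hJ0, hJneg] at h
    simp only [smul_eq_mul] at h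
    linarith
  have hsubadd : ∀ x y : U, J (x + y) ≤ J x + J y := by
    intro x y
    have h := hconv.2 (Set.mem_univ x) (Set.mem_univ y)
      (by norm_num : (0:ℝ) ≤ (1:ℝ)/2) (by norm_num : (0:ℝ) ≤ (1:ℝ)/2) (by norm_num)
    have h2 := hhom 2 (((1:ℝ)/2) • x + ((1:ℝ)/2) • y)
    have hmid : (2:ℝ) • (((1:ℝ)/2) • x + ((1:ℝ)/2) • y) = x + y := by
      rw [smul_add, smul_smul, smul_smul]; norm_num
    rw [hmid] at h2
    rw [h2]
    rw [show |(2:ℝ)| = 2 by norm_num]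
    simp only [smul_eq_mul] at h
    linarith
  -- inner product facts
  have i11 : ⟪K u₁, K u₁⟫ = 1 := by
    rw [real_inner_self_eq_norm_mul_norm, hnorm₁]; norm_num
  have i22 : ⟪K u₂, K u₂⟫ = 1 := by
    rw [real_inner_self_eq_norm_mul_norm, hnorm₂]; norm_num
  have i21 : ⟪K u₂, K u₁⟫ = 0 := by
    rw [real_inner_comm]; exact horth
  -- sign facts
  have lam₁nonneg : 0 ≤ lam₁ := hlam₁ ▸ hJnonneg u₁
  have lam₂nonneg : 0 ≤ lam₂ := hlam₂ ▸ hJnonneg u₂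
  have ht₂pos : 0 < lam₂ / γ₂ :=
    lt_of_le_of_lt (div_nonneg lam₁nonneg hγ₁.le) hord
  have lam₂pos : 0 < lam₂ := by
    rcases div_pos_iff.mp ht₂pos with ⟨h, _⟩ | ⟨_, h⟩
    · exact h
    · linarith
  have hordm : lam₁ * γ₂ < lam₂ * γ₁ := (div_lt_div_iff₀ hγ₁ hγ₂).mp hord
  -- pointwise subgradient inequalities
  have hq1 : ∀ v : U, lam₁ * ⟪K u₁, K v⟫ ≤ J v := by
    intro v
    have h := hSUB1 v
    simpa [Kstar, hJ0] using h
  have hq2 : ∀ v : U, lam₁ * ⟪K u₁, K v⟫ + lam₂ * ⟪K u₂, K v⟫ ≤ J v := by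
    intro v
    have h := hSUB2 v
    simpa [Kstar, hJ0] using h
  constructor
  · -- subdifferential inclusion
    intro t ht
    rw [huflow, hpflow]
    by_cases h1 : t < lam₁ / γ₁
    · have lam₁pos : 0 < lam₁ := by
        have : 0 < lam₁ / γ₁ := lt_of_le_of_lt ht h1
        rcases div_pos_iff.mp this with ⟨h, _⟩ | ⟨_, h⟩
        · exact h
        · linarith
      have htγ₁ : t * γ₁ ≤ lam₁ := ((lt_div_iff₀ hγ₁).mp h1).le
      simp only [if_pos h1]
      intro v
      have P := hq1 v
      have Q := hq2 v
      have hJv := hJnonneg v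
      have hev : (t • Kstar K f) (v - 0) =
          t * (γ₁ * ⟪K u₁, K v⟫ + γ₂ * ⟪K u₂, K v⟫) := by
        simp [Kstar, hf, inner_add_left, real_inner_smul_left]
        ring
      rw [hev, hJ0]
      generalize hA : (⟪K u₁, K v⟫ : ℝ) = A at P Q ⊢
      generalize hB : (⟪K u₂, K v⟫ : ℝ) = B at P Q ⊢
      have ha : 0 ≤ t * γ₂ * lam₁ :=
        mul_nonneg (mul_nonneg ht hγ₂.le) lam₁nonneg
      have hb : 0 ≤ t * (γ₁ * lam₂ - γ₂ * lam₁) :=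
        mul_nonneg ht (by nlinarith)
      have hc : 0 ≤ lam₂ * (lam₁ - t * γ₁) :=
        mul_nonneg lam₂pos.le (by linarith)
      nlinarith [mul_nonneg ha (sub_nonneg.mpr Q), mul_nonneg hb (sub_nonneg.mpr P),
        mul_nonneg hc hJv, mul_pos lam₁pos lam₂pos]
    · by_cases h2 : t < lam₂ / γ₂
      · have htγ₂ : t * γ₂ ≤ lam₂ := ((lt_div_iff₀ hγ₂).mp h2).le
        simp only [if_neg h1, if_pos h2]
        intro v
        have P := hq1 v
        have Q := hq2 v
        have hJγu : J (γ₁ • u₁) = γ₁ * lam₁ := by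
          rw [hhom, abs_of_pos hγ₁, hlam₁]
        have hev : (lam₁ • Kstar K (K u₁) + (t * γ₂) • Kstar K (K u₂)) (v - γ₁ • u₁) =
            (lam₁ * ⟪K u₁, K v⟫ + (t * γ₂) * ⟪K u₂, K v⟫) - γ₁ * lam₁ := by
          simp [Kstar, map_sub, inner_sub_right, real_inner_smul_right, i11, i21, hnorm₁]
        rw [hev, hJγu]
        generalize hA : (⟪K u₁, K v⟫ : ℝ) = A at P Q ⊢
        generalize hB : (⟪K u₂, K v⟫ : ℝ) = B at P Q ⊢
        nlinarith [mul_nonneg (mul_nonneg ht hγ₂.le) (sub_nonneg.mpr Q),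
          mul_nonneg (sub_nonneg.mpr htγ₂) (sub_nonneg.mpr P), lam₂pos]
      · simp only [if_neg h1, if_neg h2]
        intro v
        have Q := hq2 v
        -- J (γ₁ • u₁ + γ₂ • u₂) = γ₁ lam₁ + γ₂ lam₂
        have hJle : J (γ₁ • u₁ + γ₂ • u₂) ≤ γ₁ * lam₁ + γ₂ * lam₂ := by
          have := hsubadd (γ₁ • u₁) (γ₂ • u₂)
          rw [hhom, hhom, abs_of_pos hγ₁, abs_of_pos hγ₂, ← hlam₁, ← hlam₂] at this
          linarith
        have hJge : γ₁ * lam₁ + γ₂ * lam₂ ≤ J (γ₁ • u₁ + γ₂ • u₂) := by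
          have h := hq2 (γ₁ • u₁ + γ₂ • u₂)
          rw [map_add, map_smul, map_smul] at h
          simp only [inner_add_right, real_inner_smul_right, i11, i22, i21, horth] at h
          nlinarith
        have hev : (lam₁ • Kstar K (K u₁) + lam₂ • Kstar K (K u₂))
              (v - (γ₁ • u₁ + γ₂ • u₂)) =
            (lam₁ * ⟪K u₁, K v⟫ + lam₂ * ⟪K u₂, K v⟫) - (γ₁ * lam₁ + γ₂ * lam₂) := by
          simp [Kstar, map_sub, map_add, inner_sub_right, inner_add_right,
            real_inner_smul_right, i11, i22, i21, horth, hnorm₁, hnorm₂]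
        rw [hev]
        generalize hA : (⟪K u₁, K v⟫ : ℝ) = A at Q ⊢
        generalize hB : (⟪K u₂, K v⟫ : ℝ) = B at Q ⊢
        linarith
  · -- derivative
    intro t ht hne1 hne2
    rcases lt_trichotomy t (lam₁ / γ₁) with h1 | h1 | h1
    · have huv : uflow t = 0 := by rw [huflow]; simp [if_pos h1]
      have hev : pflow =ᶠ[nhds t] fun s => s • Kstar K f := by
        filter_upwards [Iio_mem_nhds h1] with s hs
        rw [hpflow]
        simp only [if_pos (Set.mem_Iio.mp hs)]
      have hd : HasDerivAt (fun s : ℝ => s • Kstar K f) ((1:ℝ) • Kstar K f) t :=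
        (hasDerivAt_id t).smul_const (Kstar K f)
      rw [huv]
      simpa using hd.congr_of_eventuallyEq hev
    · exact absurd h1 hne1
    · rcases lt_trichotomy t (lam₂ / γ₂) with h2 | h2 | h2
      · have huv : uflow t = γ₁ • u₁ := by
          rw [huflow]; simp [if_neg (not_lt.mpr h1.le), if_pos h2]
        have hev : pflow =ᶠ[nhds t] fun s =>
            lam₁ • Kstar K (K u₁) + (s * γ₂) • Kstar K (K u₂) := by
          filter_upwards [Ioo_mem_nhds h1 h2] with s hs
          rw [hpflow]
          simp only [if_neg (not_lt.mpr hs.1.le), if_pos hs.2]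
        have hd : HasDerivAt
            (fun s : ℝ => lam₁ • Kstar K (K u₁) + (s * γ₂) • Kstar K (K u₂))
            ((1 * γ₂) • Kstar K (K u₂)) t :=
          (((hasDerivAt_id t).mul_const γ₂).smul_const _).const_add _
        have hval : Kstar K (f - K (uflow t)) = (1 * γ₂) • Kstar K (K u₂) := by
          rw [huv, hf]
          ext v
          simp [Kstar, inner_sub_left, inner_add_left, real_inner_smul_left]
        rw [hval]
        exact hd.congr_of_eventuallyEq hev
      · exact absurd h2 hne2
      · have huv : uflow t = γ₁ • u₁ + γ₂ • u₂ := by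
          rw [huflow]
          have h1' : ¬ t < lam₁ / γ₁ := not_lt.mpr h1.le
          have h2' : ¬ t < lam₂ / γ₂ := not_lt.mpr h2.le
          simp [if_neg h1', if_neg h2']
        have hev : pflow =ᶠ[nhds t] fun _ =>
            lam₁ • Kstar K (K u₁) + lam₂ • Kstar K (K u₂) := by
          filter_upwards [Ioi_mem_nhds h2] with s hs
          rw [hpflow]
          have hs1 : ¬ s < lam₁ / γ₁ := not_lt.mpr (le_of_lt (lt_trans hord hs))
          have hs2 : ¬ s < lam₂ / γ₂ := not_lt.mpr (le_of_lt hs)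
          simp only [if_neg hs1, if_neg hs2]
        have hd : HasDerivAt
            (fun _ : ℝ => lam₁ • Kstar K (K u₁) + lam₂ • Kstar K (K u₂))
            0 t := hasDerivAt_const _ _
        have hval : Kstar K (f - K (uflow t)) = 0 := by
          rw [huv, hf]
          ext v
          simp [Kstar, inner_sub_left, inner_add_left, real_inner_smul_left]
        rw [hval]
        exact hd.congr_of_eventuallyEq hev
end
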